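/- Fix integers k ≥ 1, d ≥ 1, n ≥ 1 and positive integers r_1, …, r_d. Let B_n^{(r_i)} be the set of measurable k-colorings f of ℝ^d for which there exists a cube contained in [−n,n]^d having a fair splitting with exactly r_i cuts in the i-th coordinate direction for each i, and with granularity at least 1/n. Then B_n^{(r_i)} is closed with respect to the distance d: if (f_m) is a sequence in B_n^{(r_i)} and f is a measurable k-coloring with d(f_m, f) → 0, then f ∈ B_n^{(r_i)}. -/

import Mathlib

open MeasureTheory

/-- The cell (cuboid) of the grid determined by the cut points `y`, indexed by `j`. -/
def splitCell {d : ℕ} (s : Fin d → ℕ) (y : (i : Fin d) → Fin (s i + 2) → ℝ)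
    (j : (i : Fin d) → Fin (s i + 1)) : Set (Fin d → ℝ) :=
  Set.univ.pi fun i => Set.Icc (y i (j i).castSucc) (y i (j i).succ)

/-- `y` is a fair splitting (w.r.t. the coloring `c`) of the cube with corner `a` and
side length `L`, with `s i` cuts in direction `i`. -/
def IsFairSplitting {d k : ℕ} (c : (Fin d → ℝ) → Fin k) (a : Fin d → ℝ) (L : ℝ)
    (s : Fin d → ℕ) (y : (i : Fin d) → Fin (s i + 2) → ℝ) : Prop :=
  (∀ i, StrictMono (y i)) ∧ (∀ i, y i 0 = a i) ∧ (∀ i, y i (Fin.last (s i + 1)) = a i + L) ∧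
  ∃ Φ : ((i : Fin d) → Fin (s i + 1)) → Bool,
    ∀ j : Fin k,
      volume (c ⁻¹' {j} ∩ ⋃ m ∈ {m | Φ m = true}, splitCell s y m) =
      volume (c ⁻¹' {j} ∩ ⋃ m ∈ {m | Φ m = false}, splitCell s y m)

/-- The distance between two measurable colorings `f, g` of `ℝ^d`:
`d(f,g) = ∑_{n=1}^∞ λ(D_n(f,g)) / (n^d · 2^(n+1))`, where
`D_n(f,g) = {x ∈ [-n,n]^d : f x ≠ g x}`. -/
noncomputable def colDist {d k : ℕ} (f g : (Fin d → ℝ) → Fin k) : ℝ :=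
  ∑' n : ℕ,
    (volume {x : Fin d → ℝ |
        x ∈ Set.Icc (fun _ => -((n : ℝ) + 1)) (fun _ => (n : ℝ) + 1) ∧ f x ≠ g x}).toReal
      / (((n : ℝ) + 1) ^ d * 2 ^ (n + 2))

/-- `f` belongs to `B_n^{(r_i)}`: there is a cube inside `[-n,n]^d` having a fair splitting
(w.r.t. `f`) with exactly `r i` cuts in direction `i` and granularity at least `1/n`. -/
def MemB {d k : ℕ} (n : ℕ) (r : Fin d → ℕ) (f : (Fin d → ℝ) → Fin k) : Prop :=
  ∃ (a : Fin d → ℝ) (L : ℝ), 0 < L ∧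
    (∀ i, -(n : ℝ) ≤ a i ∧ a i + L ≤ (n : ℝ)) ∧
    ∃ y : (i : Fin d) → Fin (r i + 2) → ℝ,
      IsFairSplitting f a L r y ∧
      ∀ i, ∀ j : Fin (r i + 1), 1 / (n : ℝ) ≤ y i j.succ - y i j.castSucc

open Filter

section Aux

lemma aux_abs_toReal_sub_le {α : Type*} [MeasurableSpace α] {μ : Measure α} {A B D : Set α}
    (hAB : A ⊆ B ∪ D) (hBA : B ⊆ A ∪ D)
    (hA : μ A ≠ ⊤) (hB : μ B ≠ ⊤) (hD : μ D ≠ ⊤) :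
    |(μ A).toReal - (μ B).toReal| ≤ (μ D).toReal := by
  have h1 : μ A ≤ μ B + μ D := (measure_mono hAB).trans (measure_union_le _ _)
  have h2 : μ B ≤ μ A + μ D := (measure_mono hBA).trans (measure_union_le _ _)
  rw [abs_sub_le_iff]
  constructor
  · have := ENNReal.toReal_mono (ENNReal.add_ne_top.mpr ⟨hB, hD⟩) h1
    rw [ENNReal.toReal_add hB hD] at this; linarith
  · have := ENNReal.toReal_mono (ENNReal.add_ne_top.mpr ⟨hA, hD⟩) h2
    rw [ENNReal.toReal_add hA hD] at this; linarith

lemma aux_volume_hyperplane {d : ℕ} (i : Fin d) (c : ℝ) :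
    volume {x : Fin d → ℝ | x i = c} = 0 := by
  rw [MeasureTheory.volume_pi]
  exact MeasureTheory.Measure.pi_hyperplane (fun _ => (volume : Measure ℝ)) i c

lemma aux_splitCell_subset {d : ℕ} {r : Fin d → ℕ} {y : (i : Fin d) → Fin (r i + 2) → ℝ}
    (hmono : ∀ i, Monotone (y i)) {C : ℝ}
    (hlo : ∀ i, -C ≤ y i 0) (hhi : ∀ i, y i (Fin.last (r i + 1)) ≤ C)
    (m : (i : Fin d) → Fin (r i + 1)) :
    splitCell r y m ⊆ Set.Icc (fun _ => -C) (fun _ => C) := by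
  intro x hx
  have hx' : ∀ i, y i (m i).castSucc ≤ x i ∧ x i ≤ y i (m i).succ := by
    intro i; exact hx i (Set.mem_univ i)
  constructor <;> intro i
  · exact (hlo i).trans ((hmono i (Fin.zero_le _)).trans (hx' i).1)
  · exact ((hx' i).2.trans (hmono i (Fin.le_last _))).trans (hhi i)

lemma aux_splitCell_mble {d : ℕ} {r : Fin d → ℕ} (y : (i : Fin d) → Fin (r i + 2) → ℝ)
    (m : (i : Fin d) → Fin (r i + 1)) : MeasurableSet (splitCell r y m) :=
  MeasurableSet.univ_pi fun _ => measurableSet_Icc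

lemma aux_eventually_cell_iff {d : ℕ} {r : Fin d → ℕ}
    {yseq : ℕ → (i : Fin d) → Fin (r i + 2) → ℝ} {ystar : (i : Fin d) → Fin (r i + 2) → ℝ}
    (hy : ∀ i j, Tendsto (fun m => yseq m i j) atTop (nhds (ystar i j)))
    {x : Fin d → ℝ} (hx : ∀ i j, x i ≠ ystar i j) (c : (i : Fin d) → Fin (r i + 1)) :
    ∀ᶠ m in atTop, (x ∈ splitCell r (yseq m) c ↔ x ∈ splitCell r ystar c) := by
  by_cases hmem : x ∈ splitCell r ystar c
  · have h1 : ∀ i, ystar i (c i).castSucc < x i := fun i =>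
      lt_of_le_of_ne (hmem i (Set.mem_univ i)).1 (Ne.symm (hx i _))
    have h2 : ∀ i, x i < ystar i (c i).succ := fun i =>
      lt_of_le_of_ne (hmem i (Set.mem_univ i)).2 (hx i _)
    have h3 : ∀ᶠ m in atTop, ∀ i, yseq m i (c i).castSucc < x i ∧ x i < yseq m i (c i).succ :=
      eventually_all.mpr fun i =>
        ((hy i _).eventually_lt_const (h1 i)).and ((hy i _).eventually_const_lt (h2 i))
    filter_upwards [h3] with m hm
    exact iff_of_true (fun i _ => ⟨(hm i).1.le, (hm i).2.le⟩) hmem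
  · have : ∃ i, x i < ystar i (c i).castSucc ∨ ystar i (c i).succ < x i := by
      by_contra hcon
      push_neg at hcon
      exact hmem fun i _ => ⟨(hcon i).1, (hcon i).2⟩
    obtain ⟨i, hi | hi⟩ := this
    · filter_upwards [(hy i _).eventually_const_lt hi] with m hm
      refine iff_of_false (fun hc => absurd (hc i (Set.mem_univ i)).1 (not_le.mpr hm)) hmem
    · filter_upwards [(hy i _).eventually_lt_const hi] with m hm
      refine iff_of_false (fun hc => absurd (hc i (Set.mem_univ i)).2 (not_le.mpr hm)) hmem

lemma aux_vol_box_le {d : ℕ} (t : ℕ) :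
    (volume (Set.Icc (fun _ => -((t : ℝ) + 1)) (fun _ => (t : ℝ) + 1) : Set (Fin d → ℝ))).toReal
      ≤ (2 * ((t:ℝ)+1)) ^ d := by
  rw [Real.volume_Icc_pi, ENNReal.toReal_prod]
  have hnn : (0:ℝ) ≤ ((t:ℝ)+1) - -((t:ℝ)+1) := by
    have : (0:ℝ) ≤ t := Nat.cast_nonneg t
    linarith
  have h1 : (ENNReal.ofReal (((t:ℝ)+1) - -((t:ℝ)+1))).toReal = 2*((t:ℝ)+1) := by
    rw [ENNReal.toReal_ofReal hnn]; ring
  simp only [h1, Finset.prod_const, Finset.card_univ, Fintype.card_fin]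
  exact le_rfl

lemma aux_dist_term_tendsto {d k n : ℕ} (f : ℕ → (Fin d → ℝ) → Fin k) (g : (Fin d → ℝ) → Fin k)
    (hconv : Tendsto (fun m => colDist (f m) g) atTop (nhds 0)) :
    Tendsto (fun m => (volume {x : Fin d → ℝ |
        x ∈ Set.Icc (fun _ => -((n : ℝ) + 1)) (fun _ => (n : ℝ) + 1) ∧ f m x ≠ g x}).toReal)
      atTop (nhds 0) := by
  set term : ℕ → ℕ → ℝ := fun m t =>
    (volume {x : Fin d → ℝ |
        x ∈ Set.Icc (fun _ => -((t : ℝ) + 1)) (fun _ => (t : ℝ) + 1) ∧ f m x ≠ g x}).toReal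
      / (((t : ℝ) + 1) ^ d * 2 ^ (t + 2)) with hterm
  have hnonneg : ∀ m t, 0 ≤ term m t := fun m t => by
    apply div_nonneg ENNReal.toReal_nonneg (by positivity)
  have hle : ∀ m t, term m t ≤ ((2:ℝ)^d/4) * (1/2)^t := by
    intro m t
    have hC : (0:ℝ) < (((t : ℝ) + 1) ^ d * 2 ^ (t + 2)) := by positivity
    rw [hterm, div_le_iff₀ hC]
    calc (volume {x : Fin d → ℝ |
        x ∈ Set.Icc (fun _ => -((t : ℝ) + 1)) (fun _ => (t : ℝ) + 1) ∧ f m x ≠ g x}).toReal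
        ≤ (volume (Set.Icc (fun _ => -((t : ℝ) + 1)) (fun _ => (t : ℝ) + 1)
            : Set (Fin d → ℝ))).toReal := by
          apply ENNReal.toReal_mono
          · exact ((isCompact_Icc).measure_lt_top).ne
          · exact measure_mono (fun x hx => hx.1)
      _ ≤ (2 * ((t:ℝ)+1)) ^ d := aux_vol_box_le t
      _ = (2:ℝ)^d/4 * (1/2)^t * (((t:ℝ)+1)^d * 2^(t+2)) := by
          rw [mul_pow]
          field_simp
          rw [pow_add, ← mul_assoc, ← mul_pow]; norm_num
  have hsum : ∀ m, Summable (term m) := fun m =>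
    Summable.of_nonneg_of_le (hnonneg m) (hle m)
      ((summable_geometric_of_lt_one (by norm_num) (by norm_num)).mul_left _)
  have hterm_le : ∀ m, term m n ≤ colDist (f m) g := fun m =>
    Summable.le_tsum (hsum m) n (fun t _ => hnonneg m t)
  have htt : Tendsto (fun m => term m n) atTop (nhds 0) :=
    squeeze_zero (fun m => hnonneg m n) hterm_le hconv
  have := htt.mul_const ((((n : ℝ) + 1) ^ d * 2 ^ (n + 2)))
  rw [zero_mul] at this
  convert this using 2 with m
  rw [hterm]
  field_simp

end Aux

/-- `B_n^{(r_i)}` is closed w.r.t. the distance `colDist`: if colorings `f_m ∈ B_n^{(r_i)}`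
converge to a measurable coloring `f`, then `f ∈ B_n^{(r_i)}`. -/
theorem memB_closed (k d n : ℕ) (hk : 1 ≤ k) (hd : 1 ≤ d) (hn : 1 ≤ n)
    (r : Fin d → ℕ) (hr : ∀ i, 1 ≤ r i)
    (f : ℕ → (Fin d → ℝ) → Fin k)
    (hf : ∀ m, ∀ j : Fin k, MeasurableSet ((f m) ⁻¹' {j}))
    (hfB : ∀ m, MemB n r (f m))
    (g : (Fin d → ℝ) → Fin k) (hg : ∀ j : Fin k, MeasurableSet (g ⁻¹' {j}))
    (hconv : Filter.Tendsto (fun m => colDist (f m) g) Filter.atTop (nhds 0)) :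
    MemB n r g := by
  classical
  unfold MemB IsFairSplitting at hfB ⊢
  choose a L hL hbd y hFair hgran using hfB
  have hSM : ∀ m i, StrictMono (y m i) := fun m => (hFair m).1
  have hY0 : ∀ m i, y m i 0 = a m i := fun m => (hFair m).2.1
  have hYlast : ∀ m i, y m i (Fin.last (r i + 1)) = a m i + L m := fun m => (hFair m).2.2.1
  choose Φ hΦ using fun m => (hFair m).2.2.2
  have hn0 : (0:ℝ) < n := by exact_mod_cast hn
  -- pigeonhole: some Φ₀ occurs infinitely often
  obtain ⟨Φ₀, hΦ₀⟩ := Finite.exists_infinite_fiber Φ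
  have hp : {m | Φ m = Φ₀}.Infinite := Set.infinite_coe_iff.mp hΦ₀
  set φ₁ : ℕ → ℕ := Nat.nth (fun m => Φ m = Φ₀) with hφ₁def
  have hφ₁mono : StrictMono φ₁ := Nat.nth_strictMono hp
  have hφ₁mem : ∀ m, Φ (φ₁ m) = Φ₀ := fun m => Nat.nth_mem_of_infinite hp m
  -- per-m facts
  have hmonoy : ∀ m i, Monotone (y m i) := fun m i => (hSM m i).monotone
  have hyin : ∀ m i j, -(n:ℝ) ≤ y m i j ∧ y m i j ≤ n := by
    intro m i j
    constructor
    · have h1 := hmonoy m i (Fin.zero_le j)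
      rw [hY0 m i] at h1
      linarith [(hbd m i).1]
    · have h1 := hmonoy m i (Fin.le_last j)
      rw [hYlast m i] at h1
      linarith [(hbd m i).2, (hL m).le]
  -- compactness of parameter space
  set K : Set ((Fin d → ℝ) × ℝ × ((i : Fin d) → Fin (r i + 2) → ℝ)) :=
    (Set.Icc (fun _ => -(n:ℝ)) (fun _ => (n:ℝ))) ×ˢ
      ((Set.Icc 0 (2*(n:ℝ))) ×ˢ
        (Set.Icc (fun _ _ => -(n:ℝ)) (fun _ _ => (n:ℝ)))) with hKdef
  have hK : IsCompact K := isCompact_Icc.prod (isCompact_Icc.prod isCompact_Icc)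
  have i₀ : Fin d := ⟨0, hd⟩
  have hmemK : ∀ m, (a (φ₁ m), L (φ₁ m), y (φ₁ m)) ∈ K := by
    intro m
    refine ⟨⟨?_, ?_⟩, ⟨?_, ?_⟩, ⟨?_, ?_⟩⟩
    · intro i; exact (hbd _ i).1
    · intro i
      have := (hbd (φ₁ m) i).2
      have := (hL (φ₁ m)).le
      simp only []
      linarith
    · exact (hL (φ₁ m)).le
    · have h1 := (hbd (φ₁ m) i₀).1
      have h2 := (hbd (φ₁ m) i₀).2
      linarith
    · intro i
      intro j
      exact (hyin (φ₁ m) i j).1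
    · intro i
      intro j
      exact (hyin (φ₁ m) i j).2
  obtain ⟨⟨astar, Lstar, ystar⟩, -, φ₂, hφ₂, htend⟩ :=
    hK.tendsto_subseq hmemK
  set ψ : ℕ → ℕ := φ₁ ∘ φ₂ with hψdef
  have hψmono : StrictMono ψ := hφ₁mono.comp hφ₂
  have hψtop : Tendsto ψ atTop atTop := hψmono.tendsto_atTop
  have hΦψ : ∀ m, Φ (ψ m) = Φ₀ := fun m => hφ₁mem (φ₂ m)
  -- component limits
  have hta : Tendsto (fun m => a (ψ m)) atTop (nhds astar) :=
    (continuous_fst.tendsto _).comp htend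
  have htL : Tendsto (fun m => L (ψ m)) atTop (nhds Lstar) :=
    (continuous_fst.tendsto _).comp ((continuous_snd.tendsto _).comp htend)
  have hty' : Tendsto (fun m => y (ψ m)) atTop (nhds ystar) :=
    (continuous_snd.tendsto _).comp ((continuous_snd.tendsto _).comp htend)
  have hty : ∀ i j, Tendsto (fun m => y (ψ m) i j) atTop (nhds (ystar i j)) := by
    intro i j
    exact tendsto_pi_nhds.mp (tendsto_pi_nhds.mp hty' i) j
  have hta' : ∀ i, Tendsto (fun m => a (ψ m) i) atTop (nhds (astar i)) :=
    fun i => tendsto_pi_nhds.mp hta i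
  -- structure of the limit splitting
  have hgapS : ∀ i, ∀ j : Fin (r i + 1), 1/(n:ℝ) ≤ ystar i j.succ - ystar i j.castSucc := by
    intro i j
    exact ge_of_tendsto ((hty i j.succ).sub (hty i j.castSucc))
      (Eventually.of_forall fun m => hgran (ψ m) i j)
  have hSMS : ∀ i, StrictMono (ystar i) := by
    intro i
    rw [Fin.strictMono_iff_lt_succ]
    intro j
    have h1 := hgapS i j
    have h2 : (0:ℝ) < 1/n := by positivity
    linarith
  have hY0S : ∀ i, ystar i 0 = astar i := by
    intro i
    refine tendsto_nhds_unique (hty i 0) ?_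
    have h2 : Tendsto (fun m => y (ψ m) i 0) atTop (nhds (astar i)) := by
      simp only [hY0]; exact hta' i
    exact h2
  have hYlastS : ∀ i, ystar i (Fin.last (r i + 1)) = astar i + Lstar := by
    intro i
    refine tendsto_nhds_unique (hty i (Fin.last (r i + 1))) ?_
    have h2 : Tendsto (fun m => y (ψ m) i (Fin.last (r i + 1))) atTop
        (nhds (astar i + Lstar)) := by
      simp only [hYlast]; exact (hta' i).add htL
    exact h2
  have hbdS : ∀ i, -(n:ℝ) ≤ astar i ∧ astar i + Lstar ≤ n := by
    intro i
    constructor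
    · exact ge_of_tendsto (hta' i) (Eventually.of_forall fun m => (hbd (ψ m) i).1)
    · exact le_of_tendsto ((hta' i).add htL) (Eventually.of_forall fun m => (hbd (ψ m) i).2)
  have hLS : 0 < Lstar := by
    have h0 : ((0 : Fin (r i₀ + 1)).castSucc : Fin (r i₀ + 2)) = 0 := rfl
    have h1 := hgapS i₀ 0
    rw [h0, hY0S i₀] at h1
    have h2 : ystar i₀ ((0 : Fin (r i₀ + 1)).succ) ≤ ystar i₀ (Fin.last (r i₀ + 1)) :=
      (hSMS i₀).monotone (Fin.le_last _)
    rw [hYlastS i₀] at h2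
    have h3 : (0:ℝ) < 1/n := by positivity
    linarith
  -- disagreement measure tends to zero
  have hDten := aux_dist_term_tendsto (n := n) f g hconv
  -- the box and unions
  have hBoxmble : MeasurableSet (Set.Icc (fun _ => -(n:ℝ)) (fun _ => (n:ℝ)) :
      Set (Fin d → ℝ)) := measurableSet_Icc
  have hBoxfin : volume (Set.Icc (fun _ => -(n:ℝ)) (fun _ => (n:ℝ)) :
      Set (Fin d → ℝ)) ≠ ⊤ := (isCompact_Icc.measure_lt_top).ne
  have hBoxD : (Set.Icc (fun _ => -(n:ℝ)) (fun _ => (n:ℝ)) : Set (Fin d → ℝ)) ⊆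
      Set.Icc (fun _ => -((n : ℝ) + 1)) (fun _ => (n : ℝ) + 1) := by
    intro x hx
    constructor <;> intro i
    · have := hx.1 i; dsimp at this ⊢; linarith
    · have := hx.2 i; dsimp at this ⊢; linarith
  set U : ((i : Fin d) → Fin (r i + 2) → ℝ) → Bool → Set (Fin d → ℝ) :=
    fun y' b => ⋃ c ∈ {c | Φ₀ c = b}, splitCell r y' c with hUdef
  have hUmble : ∀ y' b, MeasurableSet (U y' b) := fun y' b =>
    MeasurableSet.biUnion (Set.to_countable _) (fun c _ => aux_splitCell_mble y' c)
  have hUseqBox : ∀ m b, U (y (ψ m)) b ⊆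
      (Set.Icc (fun _ => -(n:ℝ)) (fun _ => (n:ℝ)) : Set (Fin d → ℝ)) := by
    intro m b
    refine Set.iUnion₂_subset fun c _ => aux_splitCell_subset (hmonoy (ψ m)) ?_ ?_ c
    · intro i; rw [hY0]; exact (hbd _ i).1
    · intro i; rw [hYlast]; exact (hbd _ i).2
  have hUSBox : ∀ b, U ystar b ⊆
      (Set.Icc (fun _ => -(n:ℝ)) (fun _ => (n:ℝ)) : Set (Fin d → ℝ)) := by
    intro b
    refine Set.iUnion₂_subset fun c _ =>
      aux_splitCell_subset (fun i => (hSMS i).monotone) ?_ ?_ c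
    · intro i; rw [hY0S]; exact (hbdS i).1
    · intro i; rw [hYlastS]; exact (hbdS i).2
  -- a.e. avoiding the hyperplanes of the limit grid
  have hNae : ∀ᵐ x : Fin d → ℝ, ∀ i, ∀ j : Fin (r i + 2), x i ≠ ystar i j := by
    rw [MeasureTheory.ae_all_iff]
    intro i
    rw [MeasureTheory.ae_all_iff]
    intro j
    refine MeasureTheory.ae_iff.mpr ?_
    have h0 := aux_volume_hyperplane i (ystar i j)
    simpa using h0
  -- finiteness of limit pieces
  have hfinUS : ∀ (jc : Fin k) (b : Bool), volume (g ⁻¹' {jc} ∩ U ystar b) ≠ ⊤ :=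
    fun jc b => ne_top_of_le_ne_top hBoxfin
      (measure_mono ((Set.inter_subset_right).trans (hUSBox b)))
  -- measure convergence for g-pieces
  have hW : ∀ (jc : Fin k) (b : Bool),
      Tendsto (fun m => volume (g ⁻¹' {jc} ∩ U (y (ψ m)) b)) atTop
        (nhds (volume (g ⁻¹' {jc} ∩ U ystar b))) := by
    intro jc b
    apply tendsto_measure_of_ae_tendsto_indicator atTop
      ((hg jc).inter (hUmble ystar b))
      (fun m => (hg jc).inter (hUmble _ b)) hBoxmble hBoxfin
      (Eventually.of_forall fun m => (Set.inter_subset_right).trans (hUseqBox m b))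
    filter_upwards [hNae] with x hx
    have hev : ∀ᶠ m in atTop, ∀ c : (i : Fin d) → Fin (r i + 1),
        (x ∈ splitCell r (y (ψ m)) c ↔ x ∈ splitCell r ystar c) :=
      eventually_all.mpr (fun c => aux_eventually_cell_iff hty hx c)
    filter_upwards [hev] with m hm
    have hUiff : x ∈ U (y (ψ m)) b ↔ x ∈ U ystar b := by
      simp only [hUdef, Set.mem_iUnion, Set.mem_setOf_eq]
      exact exists_congr fun c => exists_congr fun _ => hm c
    exact and_congr Iff.rfl hUiff
  have hWr : ∀ (jc : Fin k) (b : Bool),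
      Tendsto (fun m => (volume (g ⁻¹' {jc} ∩ U (y (ψ m)) b)).toReal) atTop
        (nhds ((volume (g ⁻¹' {jc} ∩ U ystar b)).toReal)) := fun jc b =>
    (ENNReal.tendsto_toReal (hfinUS jc b)).comp (hW jc b)
  -- the f-pieces converge to the same limits
  have hF : ∀ (jc : Fin k) (b : Bool),
      Tendsto (fun m => (volume ((f (ψ m)) ⁻¹' {jc} ∩ U (y (ψ m)) b)).toReal) atTop
        (nhds ((volume (g ⁻¹' {jc} ∩ U ystar b)).toReal)) := by
    intro jc b
    have hdiff : Tendsto (fun m => (volume ((f (ψ m)) ⁻¹' {jc} ∩ U (y (ψ m)) b)).toReal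
        - (volume (g ⁻¹' {jc} ∩ U (y (ψ m)) b)).toReal) atTop (nhds 0) := by
      apply squeeze_zero_norm ?_ (hDten.comp hψtop)
      intro m
      rw [Real.norm_eq_abs]
      apply aux_abs_toReal_sub_le
      · intro x hx
        by_cases hgx : g x = jc
        · exact Or.inl ⟨hgx, hx.2⟩
        · refine Or.inr ⟨hBoxD (hUseqBox m b hx.2), ?_⟩
          have h1 : f (ψ m) x = jc := hx.1
          intro hcon
          exact hgx (hcon ▸ h1)
      · intro x hx
        by_cases hfx : f (ψ m) x = jc
        · exact Or.inl ⟨hfx, hx.2⟩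
        · refine Or.inr ⟨hBoxD (hUseqBox m b hx.2), ?_⟩
          have h1 : g x = jc := hx.1
          intro hcon
          exact hfx (hcon.trans h1)
      · exact ne_top_of_le_ne_top hBoxfin
          (measure_mono ((Set.inter_subset_right).trans (hUseqBox m b)))
      · exact ne_top_of_le_ne_top hBoxfin
          (measure_mono ((Set.inter_subset_right).trans (hUseqBox m b)))
      · exact ne_top_of_le_ne_top ((isCompact_Icc.measure_lt_top).ne)
          (measure_mono (fun x hx => hx.1))
    have hsum := hdiff.add (hWr jc b)
    rw [zero_add] at hsum
    have heq : (fun m => ((volume ((f (ψ m)) ⁻¹' {jc} ∩ U (y (ψ m)) b)).toReal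
        - (volume (g ⁻¹' {jc} ∩ U (y (ψ m)) b)).toReal)
        + (volume (g ⁻¹' {jc} ∩ U (y (ψ m)) b)).toReal)
        = fun m => (volume ((f (ψ m)) ⁻¹' {jc} ∩ U (y (ψ m)) b)).toReal :=
      funext fun m => by ring
    rwa [heq] at hsum
  -- conclude
  refine ⟨astar, Lstar, hLS, hbdS, ystar, ⟨hSMS, hY0S, hYlastS, Φ₀, ?_⟩, hgapS⟩
  intro jc
  have heqseq : ∀ m, (volume ((f (ψ m)) ⁻¹' {jc} ∩ U (y (ψ m)) true)).toReal
      = (volume ((f (ψ m)) ⁻¹' {jc} ∩ U (y (ψ m)) false)).toReal := by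
    intro m
    have h := hΦ (ψ m) jc
    rw [hΦψ m] at h
    exact congrArg ENNReal.toReal h
  have h1 : Tendsto (fun m => (volume ((f (ψ m)) ⁻¹' {jc} ∩ U (y (ψ m)) true)).toReal) atTop
      (nhds ((volume (g ⁻¹' {jc} ∩ U ystar false)).toReal)) := by
    simp only [heqseq]
    exact hF jc false
  have h2 := tendsto_nhds_unique (hF jc true) h1
  exact (ENNReal.toReal_eq_toReal_iff' (hfinUS jc true) (hfinUS jc false)).mp h2
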